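/- The function f(x) = x·(2 + cos x)/sin x is strictly increasing on (0, π/2). -/

import Mathlib

open Real Set

private lemma hN (x : ℝ) : HasDerivAt
    (fun x => 2*Real.sin x + Real.sin x * Real.cos x - x - 2*(x*Real.cos x))
    (2*Real.sin x * (x - Real.sin x)) x := by
  have h1 : HasDerivAt (fun x : ℝ => 2*Real.sin x) (2*Real.cos x) x :=
    (Real.hasDerivAt_sin x).const_mul 2
  have h2 : HasDerivAt (fun x : ℝ => Real.sin x * Real.cos x)
      (Real.cos x * Real.cos x + Real.sin x * (-Real.sin x)) x :=
    (Real.hasDerivAt_sin x).mul (Real.hasDerivAt_cos x)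
  have h3 : HasDerivAt (fun x : ℝ => x) 1 x := hasDerivAt_id x
  have h4 : HasDerivAt (fun x : ℝ => x * Real.cos x)
      (1 * Real.cos x + x * (-Real.sin x)) x :=
    (hasDerivAt_id x).mul (Real.hasDerivAt_cos x)
  have h := ((h1.add h2).sub h3).sub (h4.const_mul 2)
  refine h.congr_deriv ?_
  nlinarith [Real.sin_sq_add_cos_sq x]

private lemma Npos : ∀ x ∈ Ioo 0 (π/2),
    0 < 2*Real.sin x + Real.sin x * Real.cos x - x - 2*(x*Real.cos x) := by
  have hmono : StrictMonoOn
      (fun x => 2*Real.sin x + Real.sin x * Real.cos x - x - 2*(x*Real.cos x))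
      (Icc 0 (π/2)) := by
    apply strictMonoOn_of_deriv_pos (convex_Icc _ _)
    · fun_prop
    · intro x hx
      rw [interior_Icc] at hx
      rw [(hN x).deriv]
      have hs : 0 < Real.sin x := Real.sin_pos_of_pos_of_lt_pi hx.1
        (lt_trans hx.2 (by linarith [Real.pi_pos]))
      have hlt : Real.sin x < x := Real.sin_lt hx.1
      nlinarith
  intro x hx
  have := hmono (by simp [le_of_lt (by linarith [Real.pi_pos] : (0:ℝ) < π/2)])
    ⟨le_of_lt hx.1, le_of_lt hx.2⟩ hx.1
  simpa using this

theorem stmt15 :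
    StrictMonoOn (fun x : ℝ => x * (2 + Real.cos x) / Real.sin x) (Ioo 0 (π / 2)) := by
  apply strictMonoOn_of_deriv_pos (convex_Ioo _ _)
  · apply ContinuousOn.div
    · fun_prop
    · fun_prop
    · intro x hx
      exact ne_of_gt (Real.sin_pos_of_pos_of_lt_pi hx.1
        (lt_trans hx.2 (by linarith [Real.pi_pos])))
  · intro x hx
    rw [interior_Ioo] at hx
    have hs : 0 < Real.sin x := Real.sin_pos_of_pos_of_lt_pi hx.1
      (lt_trans hx.2 (by linarith [Real.pi_pos]))
    have hnum : HasDerivAt (fun x : ℝ => x * (2 + Real.cos x))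
        (1 * (2 + Real.cos x) + x * (0 + -Real.sin x)) x :=
      (hasDerivAt_id x).mul ((hasDerivAt_const x 2).add (Real.hasDerivAt_cos x))
    have hder : HasDerivAt (fun x : ℝ => x * (2 + Real.cos x) / Real.sin x)
        (((1 * (2 + Real.cos x) + x * (0 + -Real.sin x)) * Real.sin x -
          x * (2 + Real.cos x) * Real.cos x) / (Real.sin x)^2) x :=
      hnum.div (Real.hasDerivAt_sin x) (ne_of_gt hs)
    rw [hder.deriv]
    apply div_pos
    · have hN := Npos x hx
      have h1 : x * (Real.sin x^2 + Real.cos x^2) = x := by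
        rw [Real.sin_sq_add_cos_sq]; ring
      nlinarith [hN, h1]
    · positivity
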